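/- arXiv:1404.0416 — 3 statements merged into one kernel-verified Lean document; each statement's English description precedes it below -/
import Mathlib

section
/- Let Ω ⊆ ℂ ≅ ℝ² be open, and let ψ₁, ψ₂, ψ₃ : Ω → ℂ be differentiable functions with ψ₃² = ψ₁² + ψ₂² on Ω. Let C^c_{ab} be real numbers with C^c_{ab} = −C^c_{ba}, let ε₁ = ε₂ = 1, ε₃ = −1, and L^c_{ab} = C^c_{ab} − C^a_{bc} ε_a ε_c − C^b_{ac} ε_b ε_c. If ∂ψ_c/∂z̄ + (1/2) Σ_{a,b=1}^{3} L^c_{ab} conj(ψ_a) ψ_b = 0 holds on Ω for c = 1 and c = 2, then ψ₃ · (∂ψ₃/∂z̄ + (1/2) Σ_{a,b=1}^{3} L^3_{ab} conj(ψ_a) ψ_b) = 0 on Ω; in particular, at every point where ψ₃ ≠ 0, the equation ∂ψ₃/∂z̄ + (1/2) Σ_{a,b} L^3_{ab} conj(ψ_a) ψ_b = 0 also holds. -/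
open Complex

/-- The Wirtinger operator ∂/∂z̄ = (1/2)(∂/∂u + i ∂/∂v) for a map ψ : ℝ² → ℂ. -/
noncomputable def dzbarC (ψ : ℝ × ℝ → ℂ) (p : ℝ × ℝ) : ℂ :=
  (1 / 2) * (fderiv ℝ ψ p (1, 0) + Complex.I * fderiv ℝ ψ p (0, 1))

/-- Algebraic identity: from the antisymmetry of C, `w₀S₀ + w₁S₁ = w₂S₂`. -/
lemma aux_alg_identity (C : Fin 3 → Fin 3 → Fin 3 → ℝ)
    (hC : ∀ c a b, C c a b = -C c b a)
    (ε : Fin 3 → ℝ) (hε : ε = ![1, 1, -1])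
    (L : Fin 3 → Fin 3 → Fin 3 → ℝ)
    (hL : ∀ c a b, L c a b = C c a b - C a b c * ε a * ε c - C b a c * ε b * ε c)
    (u w : Fin 3 → ℂ) :
    w 0 * (∑ a : Fin 3, ∑ b : Fin 3, (L 0 a b : ℂ) * u a * w b)
    + w 1 * (∑ a : Fin 3, ∑ b : Fin 3, (L 1 a b : ℂ) * u a * w b)
    = w 2 * (∑ a : Fin 3, ∑ b : Fin 3, (L 2 a b : ℂ) * u a * w b) := by
  have hdiag : ∀ c a, C c a a = 0 := by
    intro c a; have := hC c a a; linarith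
  have h10 : ∀ c, C c 1 0 = -C c 0 1 := fun c => hC c 1 0
  have h20 : ∀ c, C c 2 0 = -C c 0 2 := fun c => hC c 2 0
  have h21 : ∀ c, C c 2 1 = -C c 1 2 := fun c => hC c 2 1
  subst hε
  simp only [Fin.sum_univ_three, hL, hdiag, h10, h20, h21,
    Matrix.cons_val_zero, Matrix.cons_val_one, Matrix.head_cons,
    Matrix.cons_val_two, Matrix.tail_cons]
  push_cast
  ring

/-- Differentiating `ψ₂² = ψ₀² + ψ₁²` with the Wirtinger operator. -/
lemma aux_deriv_identity (Ω : Set (ℝ × ℝ)) (hΩ : IsOpen Ω)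
    (ψ : Fin 3 → (ℝ × ℝ → ℂ))
    (hdiff : ∀ a, DifferentiableOn ℝ (ψ a) Ω)
    (hsq : ∀ p ∈ Ω, ψ 2 p ^ 2 = ψ 0 p ^ 2 + ψ 1 p ^ 2)
    (p : ℝ × ℝ) (hp : p ∈ Ω) :
    ψ 2 p * dzbarC (ψ 2) p = ψ 0 p * dzbarC (ψ 0) p + ψ 1 p * dzbarC (ψ 1) p := by
  have hmem : Ω ∈ nhds p := hΩ.mem_nhds hp
  have hd : ∀ a : Fin 3, HasFDerivAt (ψ a) (fderiv ℝ (ψ a) p) p := fun a =>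
    ((hdiff a p hp).differentiableAt hmem).hasFDerivAt
  have hsqd : ∀ a : Fin 3, HasFDerivAt (fun q => ψ a q * ψ a q)
      (ψ a p • fderiv ℝ (ψ a) p + ψ a p • fderiv ℝ (ψ a) p) p := fun a => (hd a).mul (hd a)
  have hG : HasFDerivAt (fun q => ψ 0 q * ψ 0 q + ψ 1 q * ψ 1 q)
      ((ψ 0 p • fderiv ℝ (ψ 0) p + ψ 0 p • fderiv ℝ (ψ 0) p)
        + (ψ 1 p • fderiv ℝ (ψ 1) p + ψ 1 p • fderiv ℝ (ψ 1) p)) p :=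
    (hsqd 0).add (hsqd 1)
  have hEq : (fun q => ψ 2 q * ψ 2 q) =ᶠ[nhds p]
      (fun q => ψ 0 q * ψ 0 q + ψ 1 q * ψ 1 q) := by
    filter_upwards [hmem] with q hq
    have := hsq q hq
    simpa [pow_two] using this
  have hG2 : HasFDerivAt (fun q => ψ 2 q * ψ 2 q)
      ((ψ 0 p • fderiv ℝ (ψ 0) p + ψ 0 p • fderiv ℝ (ψ 0) p)
        + (ψ 1 p • fderiv ℝ (ψ 1) p + ψ 1 p • fderiv ℝ (ψ 1) p)) p :=
    hG.congr_of_eventuallyEq hEq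
  have huniq := (hsqd 2).unique hG2
  have h1 := congrArg (fun (T : (ℝ × ℝ) →L[ℝ] ℂ) => T (1, 0)) huniq
  have h2 := congrArg (fun (T : (ℝ × ℝ) →L[ℝ] ℂ) => T (0, 1)) huniq
  simp only [ContinuousLinearMap.add_apply, ContinuousLinearMap.coe_smul',
    Pi.smul_apply, smul_eq_mul] at h1 h2
  simp only [dzbarC]
  linear_combination (1/4) * h1 + (Complex.I/4) * h2

/-- Lemma (complex case): if ψ₃² = ψ₁² + ψ₂² and ψ₁, ψ₂ satisfy the first two equations
∂ψ_c/∂z̄ + (1/2) Σ L^c_{ab} conj(ψ_a) ψ_b = 0 on Ω, then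
ψ₃ · (∂ψ₃/∂z̄ + (1/2) Σ L^3_{ab} conj(ψ_a) ψ_b) = 0 on Ω; in particular the third
equation holds wherever ψ₃ ≠ 0.  (Indices shifted from {1,2,3} to {0,1,2}.) -/
theorem lemma_third_equation_complex
    (Ω : Set (ℝ × ℝ)) (hΩ : IsOpen Ω)
    (ψ : Fin 3 → (ℝ × ℝ → ℂ))
    (hdiff : ∀ a, DifferentiableOn ℝ (ψ a) Ω)
    (hsq : ∀ p ∈ Ω, ψ 2 p ^ 2 = ψ 0 p ^ 2 + ψ 1 p ^ 2)
    (C : Fin 3 → Fin 3 → Fin 3 → ℝ)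
    (hC : ∀ c a b, C c a b = -C c b a)
    (ε : Fin 3 → ℝ) (hε : ε = ![1, 1, -1])
    (L : Fin 3 → Fin 3 → Fin 3 → ℝ)
    (hL : ∀ c a b, L c a b = C c a b - C a b c * ε a * ε c - C b a c * ε b * ε c)
    (heq : ∀ c : Fin 3, c = 0 ∨ c = 1 → ∀ p ∈ Ω,
      dzbarC (ψ c) p + (1 / 2) * ∑ a : Fin 3, ∑ b : Fin 3,
        (L c a b : ℂ) * (starRingEnd ℂ) (ψ a p) * ψ b p = 0) :
    ∀ p ∈ Ω,
      ψ 2 p * (dzbarC (ψ 2) p + (1 / 2) * ∑ a : Fin 3, ∑ b : Fin 3,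
        (L 2 a b : ℂ) * (starRingEnd ℂ) (ψ a p) * ψ b p) = 0 ∧
      (ψ 2 p ≠ 0 →
        dzbarC (ψ 2) p + (1 / 2) * ∑ a : Fin 3, ∑ b : Fin 3,
          (L 2 a b : ℂ) * (starRingEnd ℂ) (ψ a p) * ψ b p = 0) := by
  intro p hp
  have key := aux_deriv_identity Ω hΩ ψ hdiff hsq p hp
  have h0 := heq 0 (Or.inl rfl) p hp
  have h1 := heq 1 (Or.inr rfl) p hp
  have alg := aux_alg_identity C hC ε hε L hL
    (fun a => (starRingEnd ℂ) (ψ a p)) (fun a => ψ a p)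
  have main : ψ 2 p * (dzbarC (ψ 2) p + (1 / 2) * ∑ a : Fin 3, ∑ b : Fin 3,
      (L 2 a b : ℂ) * (starRingEnd ℂ) (ψ a p) * ψ b p) = 0 := by
    linear_combination key + ψ 0 p * h0 + ψ 1 p * h1 - (1/2) * alg
  exact ⟨main, fun hne => (mul_eq_zero.mp main).resolve_left hne⟩
end

section
/- Define f : ℝ² → ℝ³ by f(u,v) = e^{−v}((1/√2) sinh u, (1/√2) sinh u, cosh u); note the third component is always positive, so f maps into the half-space x₃ > 0. Then, with g the de Sitter metric: g_{f(u,v)}(f_u, f_u) = 1/cosh²u, g_{f(u,v)}(f_v, f_v) = −1/cosh²u, and g_{f(u,v)}(f_u, f_v) = 0 for all (u,v), so f is a conformal timelike immersion; moreover f(u,0) = ((1/√2) sinh u, (1/√2) sinh u, cosh u). -/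
noncomputable def gS (p X Y : ℝ × ℝ × ℝ) : ℝ :=
  (X.1 * Y.1 + X.2.1 * Y.2.1 - X.2.2 * Y.2.2) / p.2.2 ^ 2

noncomputable def L1 (u v : ℝ) : (ℝ × ℝ) →L[ℝ] ℝ :=
  Real.exp (-v) • ((Real.cosh u / Real.sqrt 2) • ContinuousLinearMap.fst ℝ ℝ ℝ)
    + (Real.sinh u / Real.sqrt 2) • ((-Real.exp (-v)) • ContinuousLinearMap.snd ℝ ℝ ℝ)

noncomputable def L2 (u v : ℝ) : (ℝ × ℝ) →L[ℝ] ℝ :=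
  Real.exp (-v) • (Real.sinh u • ContinuousLinearMap.fst ℝ ℝ ℝ)
    + Real.cosh u • ((-Real.exp (-v)) • ContinuousLinearMap.snd ℝ ℝ ℝ)

lemma hasFDerivAt_F (u v : ℝ) :
    HasFDerivAt (fun p : ℝ × ℝ =>
      (Real.exp (-p.2) * (Real.sinh p.1 / Real.sqrt 2),
       Real.exp (-p.2) * (Real.sinh p.1 / Real.sqrt 2),
       Real.exp (-p.2) * Real.cosh p.1))
      ((L1 u v).prod ((L1 u v).prod (L2 u v))) (u, v) := by
  have hA : HasDerivAt (fun x : ℝ => Real.exp (-x)) (-Real.exp (-v)) v := by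
    simpa [Function.comp_def] using (Real.hasDerivAt_exp (-v)).comp v (hasDerivAt_neg v)
  have hA' : HasFDerivAt (fun p : ℝ × ℝ => Real.exp (-p.2))
      ((-Real.exp (-v)) • ContinuousLinearMap.snd ℝ ℝ ℝ) (u, v) :=
    HasDerivAt.comp_hasFDerivAt (h₂ := fun x : ℝ => Real.exp (-x)) (f := fun p : ℝ × ℝ => p.2) (u, v) hA hasFDerivAt_snd
  have hB : HasFDerivAt (fun p : ℝ × ℝ => Real.sinh p.1 / Real.sqrt 2)
      ((Real.cosh u / Real.sqrt 2) • ContinuousLinearMap.fst ℝ ℝ ℝ) (u, v) :=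
    (HasDerivAt.comp_hasFDerivAt (h₂ := fun x : ℝ => Real.sinh x / Real.sqrt 2) (f := fun p : ℝ × ℝ => p.1) (u, v) ((Real.hasDerivAt_sinh u).div_const (Real.sqrt 2)) hasFDerivAt_fst)
  have hC : HasFDerivAt (fun p : ℝ × ℝ => Real.cosh p.1)
      ((Real.sinh u) • ContinuousLinearMap.fst ℝ ℝ ℝ) (u, v) :=
    (HasDerivAt.comp_hasFDerivAt (h₂ := fun x : ℝ => Real.cosh x) (f := fun p : ℝ × ℝ => p.1) (u, v) (Real.hasDerivAt_cosh u) hasFDerivAt_fst)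
  exact (hA'.mul hB).prodMk ((hA'.mul hB).prodMk (hA'.mul hC))

/-- The surface f(u,v) = e^{−v}((1/√2) sinh u, (1/√2) sinh u, cosh u) maps into the
half-space x₃ > 0 and is a conformal timelike immersion in the de Sitter space:
g(f_u,f_u) = 1/cosh²u, g(f_v,f_v) = −1/cosh²u, g(f_u,f_v) = 0; and
f(u,0) = ((1/√2) sinh u, (1/√2) sinh u, cosh u). -/
theorem deSitter_second_example
    (f : ℝ × ℝ → ℝ × ℝ × ℝ)
    (hf : ∀ p : ℝ × ℝ, f p =
      (Real.exp (-p.2) * (Real.sinh p.1 / Real.sqrt 2),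
       Real.exp (-p.2) * (Real.sinh p.1 / Real.sqrt 2),
       Real.exp (-p.2) * Real.cosh p.1)) :
    (∀ p : ℝ × ℝ, 0 < (f p).2.2) ∧
    (∀ p : ℝ × ℝ,
      gS (f p) (fderiv ℝ f p (1, 0)) (fderiv ℝ f p (1, 0)) = 1 / Real.cosh p.1 ^ 2 ∧
      gS (f p) (fderiv ℝ f p (0, 1)) (fderiv ℝ f p (0, 1)) = -(1 / Real.cosh p.1 ^ 2) ∧
      gS (f p) (fderiv ℝ f p (1, 0)) (fderiv ℝ f p (0, 1)) = 0) ∧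
    (∀ u : ℝ, f (u, 0) =
      (Real.sinh u / Real.sqrt 2, Real.sinh u / Real.sqrt 2, Real.cosh u)) := by
  have hfe : f = fun p : ℝ × ℝ =>
      (Real.exp (-p.2) * (Real.sinh p.1 / Real.sqrt 2),
       Real.exp (-p.2) * (Real.sinh p.1 / Real.sqrt 2),
       Real.exp (-p.2) * Real.cosh p.1) := funext hf
  subst hfe
  refine ⟨fun p => by positivity, fun p => ?_, fun u => by simp⟩
  obtain ⟨u, v⟩ := p
  have hD := (hasFDerivAt_F u v).fderiv
  rw [hD]
  have he : Real.exp (-v) ≠ 0 := (Real.exp_pos _).ne'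
  have hc : Real.cosh u ≠ 0 := (Real.cosh_pos u).ne'
  have h2 : (Real.sqrt 2 : ℝ) ^ 2 = 2 := Real.sq_sqrt (by norm_num)
  have hid : Real.cosh u ^ 2 - Real.sinh u ^ 2 = 1 := Real.cosh_sq_sub_sinh_sq u
  have hs2 : Real.sqrt 2 ≠ 0 := by positivity
  simp only [ContinuousLinearMap.prod_apply, ContinuousLinearMap.add_apply,
    ContinuousLinearMap.smul_apply, ContinuousLinearMap.coe_fst',
    ContinuousLinearMap.coe_snd', smul_eq_mul, gS, L1, L2]
  norm_num
  refine ⟨?_, ?_, ?_⟩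
  · field_simp
    linear_combination 2 * hid + (-1 - Real.sinh u ^ 2) * h2
  · field_simp
    linear_combination (-2) * hid + (1 - Real.cosh u ^ 2) * h2
  · field_simp
    exact Or.inl (by linear_combination (Real.exp (-v) ^ 2 * Real.cosh u * Real.sinh u) * h2)
end

section
/- Let Ω = {(u,v) ∈ ℝ² : 0 < u < π} and define complex-valued functions ψ₁(u,v) = −(sin u + i cos u)/(2 sin u), ψ₂(u,v) = (cos u − i sin u)/(2 sin u), ψ₃(u,v) = 0. Then: (1) they satisfy the ℍ²×ℝ Weierstrass system ∂ψ₁/∂z̄ − conj(ψ₁)ψ₂ = 0 and ∂ψ₂/∂z̄ + conj(ψ₁)ψ₁ = 0 on Ω; (2) ψ₁² + ψ₂² − ψ₃² = 0 on Ω; (3) |ψ₁|² + |ψ₂|² − |ψ₃|² = 1/(2 sin²u) ≠ 0 on Ω. -/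
open Complex

lemma fd_fst {g : ℝ → ℂ} {d : ℂ} {p : ℝ × ℝ} (hg : HasDerivAt g d p.1) :
    fderiv ℝ (fun q : ℝ × ℝ => g q.1) p (1, 0) = d ∧
    fderiv ℝ (fun q : ℝ × ℝ => g q.1) p (0, 1) = 0 := by
  have h : HasFDerivAt (fun q : ℝ × ℝ => g q.1)
      ((ContinuousLinearMap.smulRight (1 : ℝ →L[ℝ] ℝ) d).comp
        (ContinuousLinearMap.fst ℝ ℝ ℝ)) p :=
    hg.hasFDerivAt.comp p (hasFDerivAt_fst (𝕜 := ℝ) (p := p))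
  rw [h.fderiv]
  simp

/-- On Ω = {0 < u < π}, the Weierstrass data ψ₁ = −(sin u + i cos u)/(2 sin u),
ψ₂ = (cos u − i sin u)/(2 sin u), ψ₃ = 0 satisfies the ℍ²×ℝ system
∂ψ₁/∂z̄ − conj(ψ₁)ψ₂ = 0, ∂ψ₂/∂z̄ + conj(ψ₁)ψ₁ = 0, the condition
ψ₁² + ψ₂² − ψ₃² = 0, and |ψ₁|² + |ψ₂|² − |ψ₃|² = 1/(2 sin²u) ≠ 0. -/
theorem H2xR_horizontal_plane_data
    (Ω : Set (ℝ × ℝ)) (hΩ : Ω = {p : ℝ × ℝ | 0 < p.1 ∧ p.1 < Real.pi})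
    (ψ₁ ψ₂ ψ₃ : ℝ × ℝ → ℂ)
    (hψ₁ : ∀ p : ℝ × ℝ, ψ₁ p =
      -((Real.sin p.1 : ℂ) + Complex.I * (Real.cos p.1 : ℂ)) / (2 * (Real.sin p.1 : ℂ)))
    (hψ₂ : ∀ p : ℝ × ℝ, ψ₂ p =
      ((Real.cos p.1 : ℂ) - Complex.I * (Real.sin p.1 : ℂ)) / (2 * (Real.sin p.1 : ℂ)))
    (hψ₃ : ∀ p : ℝ × ℝ, ψ₃ p = 0) :
    (∀ p ∈ Ω, dzbarC ψ₁ p - (starRingEnd ℂ) (ψ₁ p) * ψ₂ p = 0 ∧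
      dzbarC ψ₂ p + (starRingEnd ℂ) (ψ₁ p) * ψ₁ p = 0) ∧
    (∀ p ∈ Ω, ψ₁ p ^ 2 + ψ₂ p ^ 2 - ψ₃ p ^ 2 = 0) ∧
    (∀ p ∈ Ω,
      Complex.normSq (ψ₁ p) + Complex.normSq (ψ₂ p) - Complex.normSq (ψ₃ p) =
        1 / (2 * Real.sin p.1 ^ 2) ∧
      1 / (2 * Real.sin p.1 ^ 2) ≠ 0) := by
  have hsin : ∀ p ∈ Ω, Real.sin p.1 ≠ 0 := by
    intro p hp
    rw [hΩ] at hp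
    exact ne_of_gt (Real.sin_pos_of_pos_of_lt_pi hp.1 hp.2)
  refine ⟨?_, ?_, ?_⟩
  · intro p hp
    have hs : Real.sin p.1 ≠ 0 := hsin p hp
    have hsC : (Real.sin p.1 : ℂ) ≠ 0 := by exact_mod_cast hs
    have h2s : (2 : ℂ) * (Real.sin p.1 : ℂ) ≠ 0 := mul_ne_zero two_ne_zero hsC
    set u := p.1 with hu
    have hsinD : HasDerivAt (fun t : ℝ => (Real.sin t : ℂ)) (Real.cos u) u :=
      (Real.hasDerivAt_sin u).ofReal_comp
    have hcosD : HasDerivAt (fun t : ℝ => (Real.cos t : ℂ)) (-(Real.sin u : ℂ)) u := by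
      simpa using (Real.hasDerivAt_cos u).ofReal_comp
    have hden : HasDerivAt (fun t : ℝ => (2 : ℂ) * (Real.sin t : ℂ))
        ((2 : ℂ) * (Real.cos u)) u := hsinD.const_mul 2
    have hn1 := (hsinD.add (hcosD.const_mul Complex.I)).neg
    have hg1 := hn1.div hden h2s
    have hn2 := hcosD.sub (hsinD.const_mul Complex.I)
    have hg2 := hn2.div hden h2s
    have e1 : ψ₁ = fun q : ℝ × ℝ =>
        -((Real.sin q.1 : ℂ) + Complex.I * (Real.cos q.1 : ℂ)) / (2 * (Real.sin q.1 : ℂ)) := by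
      funext q; exact hψ₁ q
    have e2 : ψ₂ = fun q : ℝ × ℝ =>
        ((Real.cos q.1 : ℂ) - Complex.I * (Real.sin q.1 : ℂ)) / (2 * (Real.sin q.1 : ℂ)) := by
      funext q; exact hψ₂ q
    have f1 := fd_fst (g := fun t : ℝ =>
        -((Real.sin t : ℂ) + Complex.I * (Real.cos t : ℂ)) / (2 * (Real.sin t : ℂ))) (p := p) hg1
    have f2 := fd_fst (g := fun t : ℝ =>
        ((Real.cos t : ℂ) - Complex.I * (Real.sin t : ℂ)) / (2 * (Real.sin t : ℂ))) (p := p) hg2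
    constructor
    · rw [dzbarC, e1, f1.1, f1.2, ← e1, hψ₁ p, hψ₂ p]
      simp only [map_div₀, map_neg, map_add, map_mul, Complex.conj_ofReal, Complex.conj_I,
        map_ofNat, Pi.neg_apply, Pi.add_apply, Pi.sub_apply]
      set S := ((Real.sin u : ℝ) : ℂ) with hS
      set C := ((Real.cos u : ℝ) : ℂ) with hC
      field_simp
      ring_nf
      simp only [Complex.I_sq]
      ring
    · rw [dzbarC, e2, f2.1, f2.2, hψ₁ p]
      simp only [map_div₀, map_neg, map_add, map_mul, Complex.conj_ofReal, Complex.conj_I,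
        map_ofNat, Pi.neg_apply, Pi.add_apply, Pi.sub_apply]
      set S := ((Real.sin u : ℝ) : ℂ) with hS
      set C := ((Real.cos u : ℝ) : ℂ) with hC
      field_simp
      ring_nf
      simp only [Complex.I_sq]
      ring
  · intro p hp
    have hs : Real.sin p.1 ≠ 0 := hsin p hp
    have hsC : (Real.sin p.1 : ℂ) ≠ 0 := by exact_mod_cast hs
    rw [hψ₁ p, hψ₂ p, hψ₃ p]
    set S := ((Real.sin p.1 : ℝ) : ℂ) with hS
    set C := ((Real.cos p.1 : ℝ) : ℂ) with hC
    field_simp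
    ring_nf
    simp only [Complex.I_sq]
    ring
  · intro p hp
    have hs : Real.sin p.1 ≠ 0 := hsin p hp
    refine ⟨?_, by positivity⟩
    rw [hψ₁ p, hψ₂ p, hψ₃ p]
    set s := Real.sin p.1 with hsdef
    set c := Real.cos p.1 with hcdef
    have pyth : s ^ 2 + c ^ 2 = 1 := Real.sin_sq_add_cos_sq p.1
    have a1 : -((s : ℂ) + Complex.I * (c : ℂ)) = ((-s : ℝ) : ℂ) + ((-c : ℝ) : ℂ) * Complex.I := by
      push_cast; ring
    have a2 : ((c : ℂ) - Complex.I * (s : ℂ)) = ((c : ℝ) : ℂ) + ((-s : ℝ) : ℂ) * Complex.I := by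
      push_cast; ring
    have a3 : (2 : ℂ) * (s : ℂ) = ((2 * s : ℝ) : ℂ) := by push_cast; ring
    rw [Complex.normSq_div, Complex.normSq_div, a1, a2, a3, Complex.normSq_add_mul_I,
      Complex.normSq_add_mul_I, Complex.normSq_ofReal, Complex.normSq_zero]
    field_simp
    nlinarith [pyth, sq_nonneg s]
end
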